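/- Let b be a nonextreme point of the unit ball of H^∞ and let a be the outer function with |a| = (1 - |b|²)^{1/2} on the circle and a(0) > 0. Then b ∈ ℋ(b) and ‖b‖²_{ℋ(b)} = |a(0)|^{-2} - 1. -/

import Mathlib

noncomputable section

open ContinuousLinearMap

/-- The Hardy space `H²` of the unit disc, realized as the Hilbert space of square-summable
Taylor-coefficient sequences. -/
abbrev H2 : Type := lp (fun _ : ℕ => ℂ) 2

/-- The value at `z` (for `z` in the unit disc) of the analytic function whose sequence of
Taylor coefficients is `f ∈ H²`. -/
def H2eval (f : H2) (z : ℂ) : ℂ := ∑' n : ℕ, f n * z ^ n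

/-- `b` belongs to the closed unit ball of `H^∞`: it is analytic and bounded by `1` on the
open unit disc. -/
def InUnitBallHinf (b : ℂ → ℂ) : Prop :=
  DifferentiableOn ℂ b (Metric.ball 0 1) ∧ ∀ z ∈ Metric.ball (0 : ℂ) 1, ‖b z‖ ≤ 1

/-- `T` is the analytic Toeplitz operator `T_b` on `H²`, i.e. the operator of multiplication
by `b`. -/
def IsMulOp (b : ℂ → ℂ) (T : H2 →L[ℂ] H2) : Prop :=
  ∀ (f : H2), ∀ z ∈ Metric.ball (0 : ℂ) 1, H2eval (T f) z = b z * H2eval f z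

/-- The norm of `h` in the operator-range space `M(T)` (the range of `T` with the inner
product making `T` a unitary from `(ker T)^⊥` onto it): the infimum (in fact the minimum) of
the norms of the `T`-preimages of `h`. -/
def rangeNorm (T : H2 →L[ℂ] H2) (h : H2) : ℝ :=
  sInf {r : ℝ | ∃ ξ : H2, T ξ = h ∧ ‖ξ‖ = r}

open scoped ComplexConjugate

local notation "⟪" x ", " y "⟫" => @inner ℂ _ _ x y

namespace Stmt17Aux

lemma summable_coeff (f : H2) {z : ℂ} (hz : ‖z‖ < 1) :
    Summable fun n : ℕ => f n * z ^ n := by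
  refine Summable.of_norm ?_
  refine Summable.of_nonneg_of_le (fun n => norm_nonneg _) (fun n => ?_)
    ((summable_geometric_of_lt_one (norm_nonneg z) hz).mul_left ‖f‖)
  rw [norm_mul, norm_pow]
  exact mul_le_mul_of_nonneg_right
    (lp.norm_apply_le_norm (by norm_num) f n) (by positivity)

lemma hasFPS (f : H2) :
    HasFPowerSeriesOnBall (H2eval f)
      (FormalMultilinearSeries.ofScalars ℂ (fun n => f n)) 0 1 := by
  constructor
  · refine FormalMultilinearSeries.le_radius_of_bound _ ‖f‖ fun n => ?_
    rw [FormalMultilinearSeries.ofScalars_norm]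
    simpa using lp.norm_apply_le_norm (by norm_num) f n
  · exact one_pos
  · intro y hy
    have hy' : ‖y‖ < 1 := by
      rw [mem_emetric_ball_zero_iff, ← ofReal_norm, ENNReal.ofReal_lt_one] at hy
      exact hy
    simp only [FormalMultilinearSeries.ofScalars_apply_eq, smul_eq_mul, zero_add]
    exact (summable_coeff f hy').hasSum

lemma coeff_eq {f g : H2} (h : ∀ z ∈ Metric.ball (0 : ℂ) 1, H2eval f z = H2eval g z) :
    f = g := by
  have h1 := (hasFPS f).hasFPowerSeriesAt
  have h2 := (hasFPS g).hasFPowerSeriesAt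
  have heq : (FormalMultilinearSeries.ofScalars ℂ fun n => f n)
      = FormalMultilinearSeries.ofScalars ℂ fun n => g n := by
    refine h1.eq_formalMultilinearSeries_of_eventually h2 ?_
    filter_upwards [Metric.ball_mem_nhds (0 : ℂ) one_pos] with z hz using h z hz
  have hcg := FormalMultilinearSeries.ofScalars_series_injective ℂ ℂ heq
  exact lp.ext (funext fun n => congrFun hcg n)

lemma H2eval_zero (f : H2) : H2eval f 0 = f 0 := by
  rw [H2eval, tsum_eq_single 0 (fun n hn => by simp [zero_pow hn])]
  simp

def e0 : H2 := lp.single 2 0 1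

lemma inner_e0 (f : H2) : ⟪e0, f⟫ = f 0 := by
  simpa [e0] using lp.inner_single_left (𝕜 := ℂ) (0 : ℕ) (1 : ℂ) f

lemma norm_e0 : ‖e0‖ = 1 := by
  have := lp.norm_single (E := fun _ : ℕ => ℂ) (p := 2)
    (by norm_num) 0 (1 : ℂ)
  simpa [e0] using this

lemma e0_zero : e0 0 = 1 := lp.single_apply_self 2 0 1

lemma H2eval_e0 (z : ℂ) : H2eval e0 z = 1 := by
  have hz : ∀ n : ℕ, n ≠ 0 → e0 n * z ^ n = 0 := by
    intro n hn
    have h0 : e0 n = 0 := lp.single_apply_ne (E := fun _ : ℕ => ℂ) 2 0 (1 : ℂ) hn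
    rw [h0, zero_mul]
  rw [H2eval, tsum_eq_single 0 hz]
  simp [e0_zero]

lemma inner_self_ℂ {E : Type*} [NormedAddCommGroup E] [InnerProductSpace ℂ E] (x : E) :
    ⟪x, x⟫ = (‖x‖ : ℂ) ^ 2 := inner_self_eq_norm_sq_to_K x

lemma normsq_sub {E : Type*} [NormedAddCommGroup E] [InnerProductSpace ℂ E] (x y : E) :
    ((‖x - y‖ : ℝ) : ℂ) ^ 2 = (‖x‖ : ℂ) ^ 2 - ⟪x, y⟫ - ⟪y, x⟫ + (‖y‖ : ℂ) ^ 2 := by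
  rw [← inner_self_ℂ, ← inner_self_ℂ, ← inner_self_ℂ]
  simp only [inner_sub_left, inner_sub_right]
  ring

/-- The defect map `f ↦ (-S T* f, f - T T* f)` into the `L²` product. -/
def wmap (S T : H2 →L[ℂ] H2) : H2 →ₗ[ℂ] WithLp 2 (H2 × H2) where
  toFun f := (WithLp.equiv 2 (H2 × H2)).symm
    (-(S (ContinuousLinearMap.adjoint T f)), f - T (ContinuousLinearMap.adjoint T f))
  map_add' x y := by
    simp only [map_add]
    rw [WithLp.equiv_symm_apply, ← WithLp.toLp_add]
    apply congrArg
    rw [Prod.mk_add_mk, Prod.mk.injEq]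
    constructor
    · abel
    · abel
  map_smul' c x := by
    simp only [map_smul, RingHom.id_apply]
    rw [WithLp.equiv_symm_apply, ← WithLp.toLp_smul]
    apply congrArg
    rw [Prod.smul_mk, Prod.mk.injEq]
    constructor
    · rw [smul_neg]
    · rw [smul_sub]

lemma wmap_fst (S T : H2 →L[ℂ] H2) (f : H2) :
    (wmap S T f).fst = -(S (ContinuousLinearMap.adjoint T f)) := rfl

lemma wmap_snd (S T : H2 →L[ℂ] H2) (f : H2) :
    (wmap S T f).snd = f - T (ContinuousLinearMap.adjoint T f) := rfl

/-- The pair `(-g, h)` in the `L²` product. -/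
def phi (g h : H2) : WithLp 2 (H2 × H2) := (WithLp.equiv 2 (H2 × H2)).symm (-g, h)

lemma phi_fst (g h : H2) : (phi g h).fst = -g := rfl

lemma phi_snd (g h : H2) : (phi g h).snd = h := rfl

end Stmt17Aux

open Stmt17Aux

set_option maxHeartbeats 2000000 in
set_option synthInstance.maxHeartbeats 400000 in
/-- Let `b` be a nonextreme point of the unit ball of `H^∞` and let `a` be
the outer function with `|a|² + |b|² = 1` on the circle and `a(0) > 0`.  (Outerness is
expressed by `aH²` being dense in `H²`, i.e. `T_a` having dense range; the boundary relation
`|a|² + |b|² = 1` is expressed by the Toeplitz identity `T_{ā}T_a = I - T_{b̄}T_b`; the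
existence of such an `a` is exactly nonextremeness of `b`.)  Then `b ∈ ℋ(b)` and
`‖b‖²_{ℋ(b)} = |a(0)|⁻² - 1`, where `ℋ(b)` is the range of `D_b = (I - T_b T_{b̄})^{1/2}`
with the range norm. -/
theorem stmt17 (b : ℂ → ℂ) (hb : InUnitBallHinf b)
    (Tb : H2 →L[ℂ] H2) (hTb : IsMulOp b Tb)
    (bseq : H2) (hbseq : ∀ z ∈ Metric.ball (0 : ℂ) 1, H2eval bseq z = b z)
    (a : ℂ → ℂ) (ha : InUnitBallHinf a)
    (Ta : H2 →L[ℂ] H2) (hTa : IsMulOp a Ta)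
    (houter : Dense (Set.range Ta))
    (hrel : adjoint Ta ∘L Ta = 1 - adjoint Tb ∘L Tb)
    (ha0 : (a 0).im = 0 ∧ 0 < (a 0).re)
    (Db : H2 →L[ℂ] H2) (hDb_pos : Db.IsPositive)
    (hDb_sq : Db ∘L Db = 1 - Tb ∘L adjoint Tb) :
    bseq ∈ Set.range Db ∧
    (rangeNorm Db bseq) ^ 2 = 1 / ‖a 0‖ ^ 2 - 1 := by
  classical
  obtain ⟨α, hα⟩ : ∃ c : ℂ, a 0 = c := ⟨a 0, rfl⟩
  rw [hα] at ha0 ⊢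
  have hα_ne : α ≠ 0 := by
    intro h
    rw [h] at ha0
    exact absurd ha0.2 (by simp)
  have hα_conj : conj α = α := Complex.conj_eq_iff_im.mpr ha0.1
  have hDbsa : adjoint Db = Db := ContinuousLinearMap.isSelfAdjoint_iff'.mp hDb_pos.isSelfAdjoint
  -- pointwise forms of the operator identities
  have hrel' : ∀ x : H2, adjoint Ta (Ta x) = x - adjoint Tb (Tb x) := by
    intro x
    have := congrFun (congrArg DFunLike.coe hrel) x
    simpa using this
  have hDb2 : ∀ x : H2, Db (Db x) = x - Tb (adjoint Tb x) := by
    intro x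
    have := congrFun (congrArg DFunLike.coe hDb_sq) x
    simpa using this
  -- evaluation facts
  have h0mem : (0 : ℂ) ∈ Metric.ball (0 : ℂ) 1 := by simp
  have hTa0 : ∀ f : H2, (Ta f) 0 = α * f 0 := by
    intro f
    have := hTa f 0 h0mem
    rw [H2eval_zero, H2eval_zero] at this
    rw [this, hα]
  -- `Tb e0 = bseq`
  have hbe : Tb e0 = bseq := by
    refine coeff_eq fun z hz => ?_
    rw [hTb e0 z hz, H2eval_e0, mul_one, hbseq z hz]
  -- adjoint of Ta on e0
  have hTasE0 : adjoint Ta e0 = conj α • e0 := by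
    refine ext_inner_right ℂ fun f => ?_
    rw [ContinuousLinearMap.adjoint_inner_left, inner_smul_left, inner_e0, inner_e0,
      hTa0 f, Complex.conj_conj]
  -- the auxiliary function g0
  obtain ⟨g0, hg0⟩ : ∃ g : H2, α⁻¹ • e0 - Ta e0 = g := ⟨_, rfl⟩
  have hE3 : adjoint Ta g0 = adjoint Tb bseq := by
    rw [← hbe, ← hg0, map_sub, map_smul, hTasE0, hα_conj, smul_smul,
      inv_mul_cancel₀ hα_ne, one_smul, hrel' e0]
    abel
  -- norm identities
  have normTa : ∀ u : H2, ‖Ta u‖ ^ 2 = ‖u‖ ^ 2 - ‖Tb u‖ ^ 2 := by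
    intro u
    have h1 : ⟪adjoint Ta (Ta u), u⟫ = ⟪Ta u, Ta u⟫ :=
      ContinuousLinearMap.adjoint_inner_left Ta u (Ta u)
    rw [hrel' u, inner_sub_left,
      ContinuousLinearMap.adjoint_inner_left Tb u (Tb u)] at h1
    rw [inner_self_ℂ, inner_self_ℂ, inner_self_ℂ] at h1
    exact_mod_cast h1.symm
  have normDb : ∀ f : H2, ‖Db f‖ ^ 2 = ‖f‖ ^ 2 - ‖adjoint Tb f‖ ^ 2 := by
    intro f
    have h1 : ⟪adjoint Db (Db f), f⟫ = ⟪Db f, Db f⟫ :=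
      ContinuousLinearMap.adjoint_inner_left Db f (Db f)
    rw [hDbsa, hDb2 f, inner_sub_left] at h1
    have h2 : ⟪Tb (adjoint Tb f), f⟫ = ⟪adjoint Tb f, adjoint Tb f⟫ := by
      rw [← ContinuousLinearMap.adjoint_inner_right Tb]
    rw [h2] at h1
    rw [inner_self_ℂ, inner_self_ℂ, inner_self_ℂ] at h1
    exact_mod_cast h1.symm
  -- norm identity for w
  have hwnormsq : ∀ f : H2, ‖wmap Ta Tb f‖ ^ 2 = ‖f‖ ^ 2 - ‖adjoint Tb f‖ ^ 2 := by
    intro f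
    rw [WithLp.prod_norm_sq_eq_of_L2, wmap_fst, wmap_snd, norm_neg]
    have e1 : ‖Ta (adjoint Tb f)‖ ^ 2
        = ‖adjoint Tb f‖ ^ 2 - ‖Tb (adjoint Tb f)‖ ^ 2 := normTa _
    have e3 : ⟪f, Tb (adjoint Tb f)⟫ = (‖adjoint Tb f‖ : ℂ) ^ 2 := by
      rw [← ContinuousLinearMap.adjoint_inner_left Tb, inner_self_ℂ]
    have e4 : ⟪Tb (adjoint Tb f), f⟫ = (‖adjoint Tb f‖ : ℂ) ^ 2 := by
      rw [← ContinuousLinearMap.adjoint_inner_right Tb, inner_self_ℂ]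
    have e2 : ((‖f - Tb (adjoint Tb f)‖ : ℝ) : ℂ) ^ 2 = (‖f‖ : ℂ) ^ 2
        - 2 * (‖adjoint Tb f‖ : ℂ) ^ 2 + (‖Tb (adjoint Tb f)‖ : ℂ) ^ 2 := by
      rw [normsq_sub, e3, e4]; ring
    have e2' : ‖f - Tb (adjoint Tb f)‖ ^ 2 = ‖f‖ ^ 2
        - 2 * ‖adjoint Tb f‖ ^ 2 + ‖Tb (adjoint Tb f)‖ ^ 2 := by
      exact_mod_cast e2
    rw [e1, e2']
    ring
  have hwnorm : ∀ f : H2, ‖wmap Ta Tb f‖ = ‖Db f‖ := by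
    intro f
    have h := (hwnormsq f).trans (normDb f).symm
    have h2 := congrArg Real.sqrt h
    rwa [Real.sqrt_sq (norm_nonneg _), Real.sqrt_sq (norm_nonneg _)] at h2
  -- key inner product identity
  have hinner : ∀ f : H2, ⟪wmap Ta Tb f, phi g0 bseq⟫ = ⟪f, bseq⟫ := by
    intro f
    rw [WithLp.prod_inner_apply, WithLp.ofLp_fst, WithLp.ofLp_snd, WithLp.ofLp_fst, WithLp.ofLp_snd, wmap_fst, wmap_snd, phi_fst, phi_snd, inner_neg_neg]
    have e1 : ⟪Ta (adjoint Tb f), g0⟫ = ⟪Tb (adjoint Tb f), bseq⟫ := by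
      rw [← ContinuousLinearMap.adjoint_inner_right Ta, hE3,
        ContinuousLinearMap.adjoint_inner_right]
    rw [e1, inner_sub_left]
    ring
  -- Φ is in the closure of the range of w
  have hΦmem : phi g0 bseq ∈ (LinearMap.range (wmap Ta Tb)).topologicalClosure := by
    rw [← Submodule.orthogonal_orthogonal_eq_closure]
    rw [Submodule.mem_orthogonal]
    intro ψ hψ
    have hψ' : ∀ f : H2, ⟪wmap Ta Tb f, ψ⟫ = 0 := fun f =>
      (Submodule.mem_orthogonal _ ψ).mp hψ (wmap Ta Tb f)
        (LinearMap.mem_range_self (wmap Ta Tb) f)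
    obtain ⟨p, hpdef⟩ : ∃ p : H2, ψ.fst = p := ⟨_, rfl⟩
    obtain ⟨q, hqdef⟩ : ∃ q : H2, ψ.snd = q := ⟨_, rfl⟩
    have key : ∀ f : H2,
        ⟪f, -(Tb (adjoint Ta p)) + (q - Tb (adjoint Tb q))⟫ = 0 := by
      intro f
      have hf := hψ' f
      rw [WithLp.prod_inner_apply, WithLp.ofLp_fst, WithLp.ofLp_snd, WithLp.ofLp_fst, WithLp.ofLp_snd, wmap_fst, wmap_snd, hpdef, hqdef] at hf
      have e1 : ⟪-(Ta (adjoint Tb f)), p⟫ = ⟪f, -(Tb (adjoint Ta p))⟫ := by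
        rw [inner_neg_left, inner_neg_right]
        congr 1
        rw [← ContinuousLinearMap.adjoint_inner_right Ta,
          ContinuousLinearMap.adjoint_inner_left]
      have e2 : ⟪f - Tb (adjoint Tb f), q⟫ = ⟪f, q - Tb (adjoint Tb q)⟫ := by
        rw [inner_sub_left, inner_sub_right]
        congr 1
        rw [← ContinuousLinearMap.adjoint_inner_right Tb,
          ContinuousLinearMap.adjoint_inner_left]
      rw [e1, e2, ← inner_add_right] at hf
      exact hf
    have hstar : Tb (adjoint Ta p) = q - Tb (adjoint Tb q) := by
      have h0 : -(Tb (adjoint Ta p)) + (q - Tb (adjoint Tb q)) = 0 :=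
        ext_inner_left ℂ fun v => by rw [key v, inner_zero_right]
      have h1 := neg_eq_of_add_eq_zero_left h0
      exact (neg_inj.mp h1).symm
    obtain ⟨x, hxdef⟩ : ∃ x : H2, adjoint Ta p + adjoint Tb q = x := ⟨_, rfl⟩
    have hTbx : Tb x = q := by
      rw [← hxdef, map_add, hstar]
      abel
    have hkernel : adjoint Ta (p - Ta x) = 0 := by
      rw [map_sub, hrel' x, hTbx, ← hxdef]
      abel
    have hpx : p = Ta x := by
      have hd : ∀ u ∈ Set.range Ta, ⟪u, p - Ta x⟫ = 0 := by
        rintro u ⟨y, rfl⟩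
        rw [← ContinuousLinearMap.adjoint_inner_right Ta, hkernel, inner_zero_right]
      have hcont : Continuous fun u : H2 => ⟪u, p - Ta x⟫ :=
        continuous_id.inner continuous_const
      have hzero : (fun u : H2 => ⟪u, p - Ta x⟫) = fun _ => (0 : ℂ) :=
        Continuous.ext_on houter hcont continuous_const fun u hu => hd u hu
      have h00 : p - Ta x = 0 := inner_self_eq_zero.mp (congrFun hzero (p - Ta x))
      exact sub_eq_zero.mp h00
    -- now compute ⟪ψ, Φ⟫ = 0
    rw [WithLp.prod_inner_apply, WithLp.ofLp_fst, WithLp.ofLp_snd, WithLp.ofLp_fst, WithLp.ofLp_snd, phi_fst, phi_snd, hpdef, hqdef, hpx, ← hTbx,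
      inner_neg_right, ← ContinuousLinearMap.adjoint_inner_right Ta, hE3,
      ContinuousLinearMap.adjoint_inner_right]
    ring
  -- extract an approximating sequence
  have hΦclos : phi g0 bseq ∈
      closure ((LinearMap.range (wmap Ta Tb) : Submodule ℂ _) : Set (WithLp 2 (H2 × H2))) := by
    rw [← Submodule.topologicalClosure_coe]
    exact hΦmem
  obtain ⟨u, humem, hulim⟩ := mem_closure_iff_seq_limit.mp hΦclos
  choose f hf using fun n => humem n
  have hfu : ∀ n, wmap Ta Tb (f n) = u n := fun n => (hf n)
  -- the sequence Db (f n) is Cauchy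
  have hdist : ∀ m n : ℕ, dist (Db (f m)) (Db (f n)) = dist (u m) (u n) := by
    intro m n
    rw [dist_eq_norm, dist_eq_norm, ← map_sub, ← hwnorm, map_sub, hfu, hfu]
  have hucauchy : CauchySeq u := hulim.cauchySeq
  have hcauchy : CauchySeq fun n => Db (f n) := by
    rw [Metric.cauchySeq_iff] at hucauchy ⊢
    intro ε hε
    obtain ⟨N, hN⟩ := hucauchy ε hε
    exact ⟨N, fun m hm n hn => by rw [hdist]; exact hN m hm n hn⟩
  obtain ⟨ξ0, hξ0⟩ := cauchySeq_tendsto_of_complete hcauchy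
  -- Db ξ0 = bseq
  have hsndcont : Continuous fun x : WithLp 2 (H2 × H2) => x.snd :=
    continuous_snd.comp (WithLp.prodContinuousLinearEquiv 2 ℂ H2 H2).continuous
  have hsndlim : Filter.Tendsto (fun n => (u n).snd) Filter.atTop (nhds bseq) := by
    have h1 := (hsndcont.tendsto (phi g0 bseq)).comp hulim
    rwa [phi_snd] at h1
  have hDbf2 : ∀ n, Db (Db (f n)) = (u n).snd := by
    intro n
    rw [← hfu n, wmap_snd, hDb2]
  have hDblim : Filter.Tendsto (fun n => Db (Db (f n))) Filter.atTop (nhds (Db ξ0)) :=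
    (Db.continuous.tendsto ξ0).comp hξ0
  have hDbξ0 : Db ξ0 = bseq := by
    refine tendsto_nhds_unique hDblim ?_
    simpa only [hDbf2] using hsndlim
  -- ‖ξ0‖ = ‖Φ‖
  have hnormξ0 : ‖ξ0‖ = ‖phi g0 bseq‖ := by
    have l1 : Filter.Tendsto (fun n => ‖Db (f n)‖) Filter.atTop (nhds ‖ξ0‖) :=
      (continuous_norm.tendsto ξ0).comp hξ0
    have l2 : Filter.Tendsto (fun n => ‖Db (f n)‖) Filter.atTop (nhds ‖phi g0 bseq‖) := by
      have h1 := (continuous_norm.tendsto (phi g0 bseq)).comp hulim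
      have heq : (fun n => ‖Db (f n)‖) = fun n => ‖u n‖ := by
        funext n
        rw [← hfu n, hwnorm]
      rwa [heq]
    exact tendsto_nhds_unique l1 l2
  -- lower bound for all preimages
  have hlb : ∀ ξ : H2, Db ξ = bseq → ‖phi g0 bseq‖ ≤ ‖ξ‖ := by
    intro ξ hξ
    have hbound : ∀ n, ‖⟪u n, phi g0 bseq⟫‖ ≤ ‖u n‖ * ‖ξ‖ := by
      intro n
      rw [← hfu n, hinner, ← hξ]
      have e1 : ⟪f n, Db ξ⟫ = ⟪Db (f n), ξ⟫ := by
        conv_lhs => rw [← hDbsa, ContinuousLinearMap.adjoint_inner_right]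
      rw [e1, hwnorm]
      exact norm_inner_le_norm _ _
    have l1 : Filter.Tendsto (fun n => ‖⟪u n, phi g0 bseq⟫‖) Filter.atTop
        (nhds (‖phi g0 bseq‖ ^ 2)) := by
      have t1 : Filter.Tendsto (fun n => ⟪u n, phi g0 bseq⟫) Filter.atTop
          (nhds ⟪phi g0 bseq, phi g0 bseq⟫) :=
        hulim.inner tendsto_const_nhds
      have t2 := (continuous_norm.tendsto (⟪phi g0 bseq, phi g0 bseq⟫ : ℂ)).comp t1
      have t3 : ‖(⟪phi g0 bseq, phi g0 bseq⟫ : ℂ)‖ = ‖phi g0 bseq‖ ^ 2 := by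
        rw [inner_self_ℂ]
        rw [norm_pow, Complex.norm_real, Real.norm_eq_abs, abs_norm]
      rwa [t3] at t2
    have l2 : Filter.Tendsto (fun n => ‖u n‖ * ‖ξ‖) Filter.atTop
        (nhds (‖phi g0 bseq‖ * ‖ξ‖)) :=
      ((continuous_norm.tendsto (phi g0 bseq)).comp hulim).mul_const ‖ξ‖
    have hfin : ‖phi g0 bseq‖ ^ 2 ≤ ‖phi g0 bseq‖ * ‖ξ‖ :=
      le_of_tendsto_of_tendsto' l1 l2 hbound
    rcases eq_or_lt_of_le (norm_nonneg (phi g0 bseq)) with h | h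
    · rw [← h]
      exact norm_nonneg ξ
    · nlinarith
  -- compute the infimum
  have hSinf : rangeNorm Db bseq = ‖phi g0 bseq‖ := by
    rw [rangeNorm]
    have hmem : ‖phi g0 bseq‖ ∈ {r : ℝ | ∃ ξ : H2, Db ξ = bseq ∧ ‖ξ‖ = r} :=
      ⟨ξ0, hDbξ0, hnormξ0⟩
    have hlb' : ∀ r ∈ {r : ℝ | ∃ ξ : H2, Db ξ = bseq ∧ ‖ξ‖ = r}, ‖phi g0 bseq‖ ≤ r := by
      rintro r ⟨ξ, hξ, rfl⟩
      exact hlb ξ hξ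
    exact le_antisymm (csInf_le ⟨‖phi g0 bseq‖, hlb'⟩ hmem) (le_csInf ⟨‖phi g0 bseq‖, hmem⟩ hlb')
  -- compute ‖Φ‖²
  have hval : ‖phi g0 bseq‖ ^ 2 = 1 / ‖α‖ ^ 2 - 1 := by
    rw [WithLp.prod_norm_sq_eq_of_L2, phi_fst, phi_snd, norm_neg]
    have e2 : ⟪(α⁻¹ : ℂ) • e0, Ta e0⟫ = 1 := by
      rw [inner_smul_left, inner_e0, hTa0, e0_zero, mul_one, map_inv₀, hα_conj,
        inv_mul_cancel₀ hα_ne]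
    have e2' : ⟪Ta e0, (α⁻¹ : ℂ) • e0⟫ = 1 := by
      rw [← inner_conj_symm, e2, map_one]
    have e3 : ‖(α⁻¹ : ℂ) • e0‖ ^ 2 = 1 / ‖α‖ ^ 2 := by
      rw [norm_smul, norm_e0, mul_one, norm_inv, one_div, inv_pow]
    have e1c : ((‖g0‖ : ℝ) : ℂ) ^ 2 = ((‖(α⁻¹ : ℂ) • e0‖ : ℝ) : ℂ) ^ 2
        - 2 + (‖Ta e0‖ : ℂ) ^ 2 := by
      rw [← hg0, normsq_sub, e2, e2']; ring
    have e1 : ‖g0‖ ^ 2 = ‖(α⁻¹ : ℂ) • e0‖ ^ 2 - 2 + ‖Ta e0‖ ^ 2 := by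
      exact_mod_cast e1c
    have e4 : ‖bseq‖ ^ 2 = 1 - ‖Ta e0‖ ^ 2 := by
      rw [← hbe]
      have h5 := normTa e0
      rw [norm_e0] at h5
      linarith
    rw [e1, e3, e4]
    ring
  exact ⟨⟨ξ0, hDbξ0⟩, by rw [hSinf, hval]⟩
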